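/- Let H_X and H_Y be real Hilbert spaces, w_1, …, w_n ∈ H_X with Gram matrix k, u_1, …, u_n ∈ H_Y, and ε > 0. Let D := Ĉ_YY − Ĉ_YX ∘ (Ĉ_XX + ε·Id)^{-1} ∘ Ĉ_XY be the regularized empirical conditional covariance operator on H_Y. Then D is positive: for every φ ∈ H_Y, writing b ∈ ℝ^n for the vector with b_p = ⟨u_p, φ⟩, one has ⟨D φ, φ⟩ = ε · bᵀ (k + nε·I_n)^{-1} b ≥ 0. -/

import Mathlib

open scoped RealInnerProductSpace BigOperators
open Matrix

/-- The regularized empirical conditional covariance operator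
`D = Ĉ_YY − Ĉ_YX ∘ (Ĉ_XX + ε Id)⁻¹ ∘ Ĉ_XY` is positive:
`⟪D φ, φ⟫ = ε bᵀ (k + nε Iₙ)⁻¹ b ≥ 0` where `b = (⟪uₚ, φ⟫)ₚ`. -/
theorem conditional_covariance_positive
    {HX HY : Type*} [NormedAddCommGroup HX] [InnerProductSpace ℝ HX]
    [NormedAddCommGroup HY] [InnerProductSpace ℝ HY]
    (n : ℕ) (hn : 0 < n) (w : Fin n → HX) (u : Fin n → HY)
    (k : Matrix (Fin n) (Fin n) ℝ) (hk : ∀ i j, k i j = ⟪w i, w j⟫)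
    (ε : ℝ) (hε : 0 < ε)
    -- `R` is the inverse of the regularized covariance operator `Ĉ_XX + ε Id`:
    (R : HX → HX)
    (hR1 : ∀ φ : HX, ((1 / (n : ℝ)) • ∑ p, ⟪w p, R φ⟫ • w p) + ε • R φ = φ)
    (hR2 : ∀ φ : HX, R (((1 / (n : ℝ)) • ∑ p, ⟪w p, φ⟫ • w p) + ε • φ) = φ)
    -- `D = Ĉ_YY − Ĉ_YX ∘ R ∘ Ĉ_XY`:
    (D : HY → HY)
    (hD : ∀ φ : HY,
      D φ = (1 / (n : ℝ)) • ∑ p, ⟪u p, φ⟫ • u p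
        - (1 / (n : ℝ)) •
            ∑ p, ⟪w p, R ((1 / (n : ℝ)) • ∑ q, ⟪u q, φ⟫ • w q)⟫ • u p) :
    ∀ φ : HY,
      ⟪D φ, φ⟫ = ε * ((fun q => ⟪u q, φ⟫) ⬝ᵥ
          (k + ((n : ℝ) * ε) • 1)⁻¹.mulVec fun q => ⟪u q, φ⟫) ∧
      0 ≤ ⟪D φ, φ⟫ := by
  intro φ
  have hn' : (n : ℝ) ≠ 0 := Nat.cast_ne_zero.mpr hn.ne'
  set b : Fin n → ℝ := fun q => ⟪u q, φ⟫ with hbdef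
  set ψ : HX := R ((1 / (n : ℝ)) • ∑ q, b q • w q) with hψ
  set a : Fin n → ℝ := fun p => ⟪w p, ψ⟫ with hadef
  set M : Matrix (Fin n) (Fin n) ℝ := k + ((n : ℝ) * ε) • 1 with hM
  -- k is positive semidefinite
  have hksymm : k.IsHermitian := by
    ext i j
    simp [hk, conjTranspose_apply, real_inner_comm]
  have hkps : k.PosSemidef := by
    refine .of_dotProduct_mulVec_nonneg hksymm fun x => ?_
    have hstar : star x = x := by funext j; simp
    have hxx : x ⬝ᵥ k *ᵥ x = ⟪∑ i, x i • w i, ∑ j, x j • w j⟫ := by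
      rw [sum_inner]
      simp only [inner_sum, real_inner_smul_left, real_inner_smul_right]
      simp only [dotProduct, mulVec, dotProduct, hk, Finset.mul_sum]
      refine Finset.sum_congr rfl fun i _ => Finset.sum_congr rfl fun j _ => by ring
    rw [hstar, hxx]
    exact real_inner_self_nonneg
  have hMpd : M.PosDef := by
    have h1herm : (((n : ℝ) * ε) • (1 : Matrix (Fin n) (Fin n) ℝ)).IsHermitian := by
      simp [Matrix.IsHermitian]
    refine .of_dotProduct_mulVec_pos (hksymm.add h1herm) fun x hx => ?_
    have hstar : star x = x := by funext j; simp
    have h1 : (star x) ⬝ᵥ M *ᵥ x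
        = (star x) ⬝ᵥ k *ᵥ x + ((n : ℝ) * ε) * (x ⬝ᵥ x) := by
      simp [hM, add_mulVec, dotProduct_add, smul_mulVec, one_mulVec,
        dotProduct_smul, smul_eq_mul, hstar]
    rw [h1]
    have h2 : 0 < x ⬝ᵥ x := by
      obtain ⟨i, hi⟩ := Function.ne_iff.mp hx
      simp only [dotProduct]
      exact Finset.sum_pos' (fun j _ => mul_self_nonneg (x j))
        ⟨i, Finset.mem_univ i, mul_self_pos.mpr hi⟩
    have h3 : (0:ℝ) ≤ (star x) ⬝ᵥ k *ᵥ x := hkps.dotProduct_mulVec_nonneg x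
    nlinarith [mul_pos (mul_pos (Nat.cast_pos.mpr hn : (0:ℝ) < n) hε) h2]
  have hMinv : M⁻¹.PosDef := hMpd.inv
  have hMunit : IsUnit M := hMpd.isUnit
  -- key relation: M *ᵥ a = k *ᵥ b
  have hkey : ((1 / (n : ℝ)) • ∑ p, a p • w p) + ε • ψ
      = (1 / (n : ℝ)) • ∑ q, b q • w q := hR1 _
  have hMa : M *ᵥ a = k *ᵥ b := by
    funext i
    have hinner := congrArg (fun v => ⟪w i, v⟫) hkey
    simp only [inner_add_right, inner_smul_right, inner_sum,
      real_inner_smul_right] at hinner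
    have hai : (⟪w i, ψ⟫ : ℝ) = a i := rfl
    rw [hai] at hinner
    -- hinner : 1/n * ∑ p, a p * ⟪w i, w p⟫ + ε * a i = 1/n * ∑ q, b q * ⟪w i, w q⟫
    have h2 : (∑ p, a p * ⟪w i, w p⟫) + (n : ℝ) * ε * a i
        = ∑ q, b q * ⟪w i, w q⟫ := by
      have h := congrArg (fun t => (n : ℝ) * t) hinner
      simp only [mul_add, ← mul_assoc, mul_one_div_cancel hn', one_mul] at h
      linarith
    have hMai : (M *ᵥ a) i = (∑ p, a p * ⟪w i, w p⟫) + (n : ℝ) * ε * a i := by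
      simp only [hM, mulVec, dotProduct, Matrix.add_apply, Matrix.smul_apply,
        Matrix.one_apply, smul_eq_mul, hk, add_mul, mul_ite, mul_one, mul_zero,
        ite_mul, zero_mul, Finset.sum_add_distrib, Finset.sum_ite_eq,
        Finset.mem_univ, if_true]
      rw [Finset.sum_congr rfl fun j _ => mul_comm (⟪w i, w j⟫ : ℝ) (a j)]
    have hkbi : (k *ᵥ b) i = ∑ q, b q * ⟪w i, w q⟫ := by
      simp only [mulVec, dotProduct, hk]
      exact Finset.sum_congr rfl fun j _ => mul_comm _ _
    rw [hMai, hkbi, h2]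
  -- hence M *ᵥ (b - a) = (n ε) • b
  have hMba : M *ᵥ (b - a) = ((n : ℝ) * ε) • b := by
    rw [mulVec_sub, hMa]
    funext i
    simp only [Pi.sub_apply, Pi.smul_apply, smul_eq_mul, hM, add_mulVec,
      smul_mulVec, one_mulVec, Pi.add_apply]
    ring
  have hba : b - a = ((n : ℝ) * ε) • (M⁻¹ *ᵥ b) := by
    have h := congrArg (fun v => M⁻¹ *ᵥ v) hMba
    simp only [mulVec_mulVec] at h
    rw [Matrix.nonsing_inv_mul M (isUnit_iff_isUnit_det M |>.1 hMunit), one_mulVec] at h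
    rw [h, mulVec_smul]
  -- compute the inner product
  have hDval : ⟪D φ, φ⟫ = (1 / (n : ℝ)) * ((b - a) ⬝ᵥ b) := by
    rw [hD φ]
    rw [inner_sub_left, real_inner_smul_left, real_inner_smul_left,
      sum_inner, sum_inner]
    simp only [real_inner_smul_left]
    simp only [dotProduct, Pi.sub_apply, sub_mul, Finset.sum_sub_distrib, mul_sub]
    rfl
  have hfinal : ⟪D φ, φ⟫ = ε * (b ⬝ᵥ M⁻¹ *ᵥ b) := by
    rw [hDval, hba, smul_dotProduct, dotProduct_comm]
    field_simp
    ring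
  refine ⟨hfinal, ?_⟩
  rw [hfinal]
  have hstar : star b = b := by funext j; simp
  have hnn : (0:ℝ) ≤ b ⬝ᵥ M⁻¹ *ᵥ b := by
    have := hMinv.posSemidef.dotProduct_mulVec_nonneg b
    rwa [hstar] at this
  positivity
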